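/- Let 0 < u_z < 1. The volume of the convex hull of {(x,y,xy) : x,y ∈ [0,1], xy ≤ u_z}, equal to the set {(x,y,z) : 0 ≤ x,y ≤ 1, z ≥ x+y−1, z ≥ 0, z ≤ x, z ≤ y, z ≤ u_z, z² ≤ u_z·x·y}, is (u_z/6)·(3 + 2u_z·ln(u_z) − u_z − u_z²). -/

import Mathlib

open MeasureTheory Set

namespace Stmt13Aux

def Sset (t : ℝ) : Set (ℝ × ℝ × ℝ) :=
  {p : ℝ × ℝ × ℝ |
    0 ≤ p.1 ∧ p.1 ≤ 1 ∧ 0 ≤ p.2.1 ∧ p.2.1 ≤ 1 ∧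
    p.1 + p.2.1 - 1 ≤ p.2.2 ∧ 0 ≤ p.2.2 ∧ p.2.2 ≤ p.1 ∧ p.2.2 ≤ p.2.1 ∧
    p.2.2 ≤ t ∧ p.2.2 ^ 2 ≤ t * p.1 * p.2.1}

lemma measS (t : ℝ) : MeasurableSet (Sset t) := by
  have : IsClosed (Sset t) := by
    unfold Sset
    simp only [Set.setOf_and]
    repeat' apply IsClosed.inter
    all_goals exact isClosed_le (by fun_prop) (by fun_prop)
  exact this.measurableSet

lemma vol_slice (S : Set (ℝ × ℝ × ℝ)) (hS : MeasurableSet S) :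
    volume S = ∫⁻ z, ∫⁻ x, volume {y | (x, y, z) ∈ S} := by
  have hprod : (volume : Measure (ℝ × ℝ × ℝ))
      = (volume : Measure ℝ).prod ((volume : Measure ℝ).prod volume) := rfl
  rw [hprod, Measure.prod_apply hS]
  have h2 : ∀ x : ℝ, ((volume : Measure ℝ).prod volume) (Prod.mk x ⁻¹' S)
      = ∫⁻ z, volume {y | (x, y, z) ∈ S} := by
    intro x
    have hx : MeasurableSet (Prod.mk x ⁻¹' S) := hS.preimage measurable_prodMk_left
    have hswap : ((volume : Measure ℝ).prod volume) (Prod.mk x ⁻¹' S)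
        = ((volume : Measure ℝ).prod volume) (Prod.swap ⁻¹' (Prod.mk x ⁻¹' S)) := by
      conv_lhs => rw [← Measure.prod_swap]
      rw [Measure.map_apply measurable_swap hx]
    rw [hswap, Measure.prod_apply (hx.preimage measurable_swap)]
    rfl
  simp_rw [h2]
  have hmap : Measurable (fun q : (ℝ × ℝ) × ℝ => (q.1.1, q.2, q.1.2)) :=
    (measurable_fst.fst.prodMk (measurable_snd.prodMk measurable_fst.snd))
  have hf : AEMeasurable (Function.uncurry fun x z => volume {y | (x, y, z) ∈ S})
      ((volume : Measure ℝ).prod volume) := by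
    have : (Function.uncurry fun x z => volume {y | (x, y, z) ∈ S})
        = fun p : ℝ × ℝ => volume (Prod.mk p ⁻¹' ((fun q : (ℝ × ℝ) × ℝ => (q.1.1, q.2, q.1.2)) ⁻¹' S)) := by
      ext p; rfl
    rw [this]
    exact (measurable_measure_prodMk_left (hS.preimage hmap)).aemeasurable
  exact lintegral_lintegral_swap hf

lemma sec_empty (t z x : ℝ) (h : x < z ∨ 1 < x) : {y : ℝ | (x, y, z) ∈ Sset t} = ∅ := by
  ext y
  simp only [Sset, mem_setOf_eq, mem_empty_iff_false, iff_false]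
  rintro ⟨h1, h2, h3, h4, h5, h6, h7, h8, h9, h10⟩
  rcases h with h | h <;> linarith

lemma sec_eq (t z x : ℝ) (hz0 : 0 < z) (hzt : z < t) (hx1 : z ≤ x) (hx2 : x ≤ 1) :
    {y : ℝ | (x, y, z) ∈ Sset t} = Icc (max z (z ^ 2 / (t * x))) (1 + z - x) := by
  have ht0 : 0 < t := hz0.trans hzt
  have hx0 : 0 < x := hz0.trans_le hx1
  have htx : 0 < t * x := mul_pos ht0 hx0
  ext y
  simp only [Sset, mem_setOf_eq, mem_Icc, max_le_iff]
  constructor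
  · rintro ⟨h1, h2, h3, h4, h5, h6, h7, h8, h9, h10⟩
    refine ⟨⟨h8, ?_⟩, by linarith⟩
    rw [div_le_iff₀ htx]
    nlinarith
  · rintro ⟨⟨hy1, hy2⟩, hy3⟩
    rw [div_le_iff₀ htx] at hy2
    refine ⟨by linarith, hx2, by linarith, by linarith, by linarith, hz0.le, hx1, hy1, hzt.le, by nlinarith⟩

noncomputable def Areal (t z : ℝ) : ℝ := (1 - z) ^ 2 / 2 + z ^ 2 / t * (Real.log t + 1 - t)

lemma G_eq (t z : ℝ) (ht1 : t < 1) (hz0 : 0 < z) (hzt : z < t) :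
    (∫⁻ x, volume {y : ℝ | (x, y, z) ∈ Sset t}) = ENNReal.ofReal (Areal t z)
      ∧ 0 ≤ Areal t z := by
  have ht0 : 0 < t := hz0.trans hzt
  have hzt1 : z / t < 1 := (div_lt_one ht0).mpr hzt
  have hzzt : z < z / t := by rw [lt_div_iff₀ ht0]; nlinarith
  -- piece 1
  set f1 : ℝ → ℝ := fun x => 1 + z - x - z ^ 2 / (t * x) with hf1
  have hnn1 : ∀ x ∈ Icc z (z / t), 0 ≤ f1 x := by
    intro x hx
    have hx0 : 0 < x := hz0.trans_le hx.1
    have htx : 0 < t * x := mul_pos ht0 hx0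
    have h2 : x * t ≤ z := (le_div_iff₀ ht0).mp hx.2
    rw [hf1]
    simp only
    rw [sub_nonneg, div_le_iff₀ htx]
    nlinarith [mul_nonneg (sub_nonneg.mpr hx.1) (sub_nonneg.mpr h2),
      mul_nonneg hx0.le (sub_nonneg.mpr hzt.le)]
  have hc1 : ContinuousOn f1 (Icc z (z / t)) := by
    apply ContinuousOn.sub (by fun_prop)
    apply ContinuousOn.div continuousOn_const (by fun_prop)
    intro x hx
    exact ne_of_gt (mul_pos ht0 (hz0.trans_le hx.1))
  have hint1 : IntervalIntegrable f1 volume z (z / t) := by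
    apply ContinuousOn.intervalIntegrable
    rwa [uIcc_of_le hzzt.le]
  set c1 : ℝ := (1+z)*(z/t - z) - ((z/t)^2 - z^2)/2 + z^2/t*Real.log t with hc1def
  have hftc1 : ∫ x in z..(z / t), f1 x = c1 := by
    have h := intervalIntegral.integral_eq_sub_of_hasDerivAt
      (f := fun x => (1+z)*x - x^2/2 - z^2/t*Real.log x) (f' := f1) (a := z) (b := z/t) ?_ hint1
    · rw [h]
      rw [Real.log_div hz0.ne' ht0.ne', hc1def]
      ring
    · intro x hx
      rw [uIcc_of_le hzzt.le] at hx
      have hx0 : 0 < x := hz0.trans_le hx.1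
      have h := (((hasDerivAt_id x).const_mul (1+z)).sub ((hasDerivAt_pow 2 x).div_const 2)).sub
        ((Real.hasDerivAt_log hx0.ne').const_mul (z^2/t))
      convert h using 1
      · rfl
      rw [hf1]
      field_simp
      push_cast
      ring
  have hc1nn : 0 ≤ c1 := by
    rw [← hftc1]
    exact intervalIntegral.integral_nonneg hzzt.le hnn1
  -- piece 2
  set f2 : ℝ → ℝ := fun x => 1 - x with hf2
  set c2 : ℝ := (1 - 1^2/2) - (z/t - (z/t)^2/2) with hc2def
  have hftc2 : ∫ x in (z/t)..1, f2 x = c2 := by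
    have h := intervalIntegral.integral_eq_sub_of_hasDerivAt
      (f := fun x => x - x^2/2) (f' := f2) (a := z/t) (b := 1) ?_
      (Continuous.intervalIntegrable (by fun_prop) _ _)
    · rw [h, hc2def]
    · intro x hx
      have h := (hasDerivAt_id x).sub ((hasDerivAt_pow 2 x).div_const 2)
      convert h using 1
      · rfl
      rw [hf2]
      norm_num
  have hc2nn : 0 ≤ c2 := by
    rw [← hftc2]
    apply intervalIntegral.integral_nonneg hzt1.le
    intro x hx
    rw [hf2]; simp only; linarith [hx.2]
  -- area formula
  have hA : Areal t z = c1 + c2 := by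
    rw [Areal, hc1def, hc2def]
    field_simp
    ring
  -- indicator form of sections
  have h1 : (fun x => volume {y : ℝ | (x, y, z) ∈ Sset t})
      = (Icc z 1).indicator (fun x => ENNReal.ofReal ((1 + z - x) - max z (z ^ 2 / (t * x)))) := by
    ext x
    by_cases hx : x ∈ Icc z 1
    · rw [indicator_of_mem hx, sec_eq t z x hz0 hzt hx.1 hx.2, Real.volume_Icc]
    · rw [indicator_of_notMem hx, sec_empty t z x ?_]
      · simp
      · rcases lt_or_ge x z with h | h
        · exact Or.inl h
        · exact Or.inr (not_le.mp fun h1 => hx ⟨h, h1⟩)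
  rw [h1, lintegral_indicator measurableSet_Icc]
  rw [show (volume : Measure ℝ).restrict (Icc z 1) = volume.restrict (Ioc z 1) from
    (Measure.restrict_congr_set Ioc_ae_eq_Icc).symm]
  rw [← Ioc_union_Ioc_eq_Ioc hzzt.le hzt1.le,
    lintegral_union measurableSet_Ioc (Set.Ioc_disjoint_Ioc_of_le le_rfl)]
  have e1 : ∫⁻ x in Ioc z (z / t), ENNReal.ofReal ((1 + z - x) - max z (z ^ 2 / (t * x)))
      = ENNReal.ofReal c1 := by
    have hcong : ∀ᵐ x ∂volume, x ∈ Ioc z (z / t) →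
        ENNReal.ofReal ((1 + z - x) - max z (z ^ 2 / (t * x))) = ENNReal.ofReal (f1 x) := by
      filter_upwards with x hx
      have hx0 : 0 < x := hz0.trans hx.1
      have htx : 0 < t * x := mul_pos ht0 hx0
      have hmax : max z (z ^ 2 / (t * x)) = z ^ 2 / (t * x) := by
        apply max_eq_right
        rw [le_div_iff₀ htx]
        have : x * t ≤ z := (le_div_iff₀ ht0).mp hx.2
        nlinarith
      rw [hmax, hf1]
    rw [setLIntegral_congr_fun_ae measurableSet_Ioc hcong]
    rw [← ofReal_integral_eq_lintegral_ofReal (hc1.integrableOn_Icc.mono_set Ioc_subset_Icc_self)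
      ((ae_restrict_iff' measurableSet_Ioc).mpr (ae_of_all _ fun x hx => hnn1 x ⟨hx.1.le, hx.2⟩))]
    rw [← intervalIntegral.integral_of_le hzzt.le, hftc1]
  have e2 : ∫⁻ x in Ioc (z / t) 1, ENNReal.ofReal ((1 + z - x) - max z (z ^ 2 / (t * x)))
      = ENNReal.ofReal c2 := by
    have hcong : ∀ᵐ x ∂volume, x ∈ Ioc (z / t) 1 →
        ENNReal.ofReal ((1 + z - x) - max z (z ^ 2 / (t * x))) = ENNReal.ofReal (f2 x) := by
      filter_upwards with x hx
      have hx0 : 0 < x := lt_trans (by positivity) hx.1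
      have htx : 0 < t * x := mul_pos ht0 hx0
      have hmax : max z (z ^ 2 / (t * x)) = z := by
        apply max_eq_left
        rw [div_le_iff₀ htx]
        have : z ≤ x * t := (div_le_iff₀ ht0).mp hx.1.le
        nlinarith
      rw [hmax, hf2]
      congr 1
      ring
    rw [setLIntegral_congr_fun_ae measurableSet_Ioc hcong]
    have hif2 : IntegrableOn f2 (Ioc (z/t) 1) volume :=
      (Continuous.integrableOn_Icc (by fun_prop)).mono_set Ioc_subset_Icc_self
    rw [← ofReal_integral_eq_lintegral_ofReal hif2
      ((ae_restrict_iff' measurableSet_Ioc).mpr (ae_of_all _ fun x hx => by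
        simp only [Pi.zero_apply, hf2]; linarith [hx.2]))]
    rw [← intervalIntegral.integral_of_le hzt1.le, hftc2]
  rw [e1, e2, ← ENNReal.ofReal_add hc1nn hc2nn, ← hA]
  exact ⟨rfl, by rw [hA]; positivity⟩

lemma G_zero (t z : ℝ) (h : z < 0 ∨ t < z) :
    (∫⁻ x, volume {y : ℝ | (x, y, z) ∈ Sset t}) = 0 := by
  have he : ∀ x : ℝ, {y : ℝ | (x, y, z) ∈ Sset t} = ∅ := by
    intro x
    ext y
    simp only [Sset, mem_setOf_eq, mem_empty_iff_false, iff_false]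
    rintro ⟨h1, h2, h3, h4, h5, h6, h7, h8, h9, h10⟩
    rcases h with h | h <;> linarith
  simp [he]

end Stmt13Aux

open Stmt13Aux in
theorem stmt_13 (u_z : ℝ) (h0 : 0 < u_z) (h1 : u_z < 1) :
    MeasureTheory.volume {p : ℝ × ℝ × ℝ |
        0 ≤ p.1 ∧ p.1 ≤ 1 ∧ 0 ≤ p.2.1 ∧ p.2.1 ≤ 1 ∧
        p.1 + p.2.1 - 1 ≤ p.2.2 ∧ 0 ≤ p.2.2 ∧ p.2.2 ≤ p.1 ∧ p.2.2 ≤ p.2.1 ∧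
        p.2.2 ≤ u_z ∧ p.2.2 ^ 2 ≤ u_z * p.1 * p.2.1} =
      ENNReal.ofReal ((u_z / 6) * (3 + 2 * u_z * Real.log u_z - u_z - u_z ^ 2)) := by
  set t := u_z with htdef
  show volume (Sset t) = _
  rw [vol_slice (Sset t) (measS t)]
  rw [← lintegral_add_compl (fun z => ∫⁻ x, volume {y | (x, y, z) ∈ Sset t})
    (measurableSet_Ioo (a := (0:ℝ)) (b := t))]
  have hcompl : ∫⁻ z in (Ioo (0:ℝ) t)ᶜ, (∫⁻ x, volume {y | (x, y, z) ∈ Sset t}) = 0 := by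
    have hn : volume ({0, t} : Set ℝ) = 0 := (Set.toFinite _).countable.measure_zero _
    have hae : ∀ᵐ z : ℝ ∂volume, z ∈ (Ioo (0:ℝ) t)ᶜ →
        (∫⁻ x, volume {y | (x, y, z) ∈ Sset t}) = (0 : ENNReal) := by
      filter_upwards [measure_eq_zero_iff_ae_notMem.mp hn] with z hz hmem
      apply G_zero
      simp only [mem_Ioo, not_and_or, not_lt, mem_compl_iff] at hmem
      have hz0 : z ≠ 0 := fun h => hz (by simp [h])
      have hzt : z ≠ t := fun h => hz (by simp [h])
      rcases hmem with h | h
      · exact Or.inl (lt_of_le_of_ne h hz0)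
      · exact Or.inr (lt_of_le_of_ne h (Ne.symm hzt))
    have hae0 : (fun z => ∫⁻ x, volume {y | (x, y, z) ∈ Sset t})
        =ᵐ[volume.restrict ((Ioo (0:ℝ) t)ᶜ)] (fun _ => (0 : ENNReal)) :=
      (ae_restrict_iff' measurableSet_Ioo.compl).mpr hae
    rw [lintegral_congr_ae hae0, lintegral_zero]
  rw [hcompl, add_zero]
  have hmain : ∫⁻ z in Ioo (0:ℝ) t, (∫⁻ x, volume {y | (x, y, z) ∈ Sset t})
      = ∫⁻ z in Ioo (0:ℝ) t, ENNReal.ofReal (Areal t z) :=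
    setLIntegral_congr_fun_ae measurableSet_Ioo
      (ae_of_all _ fun z hz => (G_eq t z h1 hz.1 hz.2).1)
  rw [hmain]
  -- outer integral
  have hcont : Continuous (Areal t) := by unfold Areal; fun_prop
  rw [← ofReal_integral_eq_lintegral_ofReal
    ((hcont.integrableOn_Icc).mono_set Ioo_subset_Icc_self)
    ((ae_restrict_iff' measurableSet_Ioo).mpr (ae_of_all _ fun z hz => (G_eq t z h1 hz.1 hz.2).2))]
  have hIoo : ∫ z in Ioo (0:ℝ) t, Areal t z = ∫ z in (0:ℝ)..t, Areal t z := by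
    rw [intervalIntegral.integral_of_le h0.le, integral_Ioc_eq_integral_Ioo]
  rw [hIoo]
  have hftc := intervalIntegral.integral_eq_sub_of_hasDerivAt (a := (0:ℝ)) (b := t)
      (f := fun z => z/2 - z^2/2 + z^3/6 + (Real.log t + 1 - t)/(3*t)*z^3) (f' := Areal t)
      (by
        intro z hz
        have h := ((((hasDerivAt_id z).div_const 2).sub ((hasDerivAt_pow 2 z).div_const 2)).add
          ((hasDerivAt_pow 3 z).div_const 6)).add
          ((hasDerivAt_pow 3 z).const_mul ((Real.log t + 1 - t)/(3*t)))
        convert h using 1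
        · rfl
        unfold Areal
        field_simp
        ring)
      (Continuous.intervalIntegrable hcont _ _)
  rw [hftc]
  congr 1
  field_simp
  ring
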